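/- If τ : Ω → Ω is a measurable transformation on a σ-finite measure space (Ω, Σ, μ) such that μ(τ^{-1}(A)) ≤ K·μ(A) for some constant K > 0 and all A ∈ Σ with μ(A) < ∞, then the composition operator C_τ f = f ∘ τ is a bounded linear operator from the Orlicz space L^φ(Ω) into itself. -/

import Mathlib

open MeasureTheory

/-- An Orlicz function: continuous, convex, nondecreasing on `[0,∞)`, vanishing exactly at `0`,
with `φ(x)/x → 0` as `x → 0⁺` and `φ(x)/x → ∞` as `x → ∞`. -/
def IsOrliczFn (φ : ℝ → ℝ) : Prop :=
  ContinuousOn φ (Set.Ici 0) ∧ ConvexOn ℝ (Set.Ici 0) φ ∧ MonotoneOn φ (Set.Ici 0) ∧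
  (∀ x : ℝ, 0 ≤ x → (φ x = 0 ↔ x = 0)) ∧
  Filter.Tendsto (fun x => φ x / x) (nhdsWithin 0 (Set.Ioi 0)) (nhds 0) ∧
  Filter.Tendsto (fun x => φ x / x) Filter.atTop Filter.atTop

/-- Membership in the Orlicz space `L^φ(Ω)`: `∫ φ(α|f|) dμ < ∞` for some `α > 0`. -/
def MemOrlicz (φ : ℝ → ℝ) {Ω : Type*} [MeasurableSpace Ω] (μ : Measure Ω) (f : Ω → ℝ) : Prop :=
  Measurable f ∧ ∃ α : ℝ, 0 < α ∧ ∫⁻ x, ENNReal.ofReal (φ (α * |f x|)) ∂μ < ⊤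

/-- The Luxemburg norm on the Orlicz space `L^φ(Ω)`. -/
noncomputable def luxNorm (φ : ℝ → ℝ) {Ω : Type*} [MeasurableSpace Ω] (μ : Measure Ω)
    (f : Ω → ℝ) : ℝ :=
  sInf {k : ℝ | 0 < k ∧ ∫⁻ x, ENNReal.ofReal (φ (|f x| / k)) ∂μ ≤ 1}

/-- `τ` induces a bounded composition operator `C_τ f = f ∘ τ` on `L^φ(Ω)`. -/
def BoundedCompOp (φ : ℝ → ℝ) {Ω : Type*} [MeasurableSpace Ω] (μ : Measure Ω)
    (τ : Ω → Ω) : Prop :=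
  (∀ f : Ω → ℝ, MemOrlicz φ μ f → MemOrlicz φ μ (f ∘ τ)) ∧
  ∃ C : ℝ, 0 ≤ C ∧ ∀ f : Ω → ℝ, MemOrlicz φ μ f →
    luxNorm φ μ (f ∘ τ) ≤ C * luxNorm φ μ f

/-- The kernel of `C_τ ^ k` acting on `L^φ(Ω)` (at the level of a.e. equality). -/
def kerPow (φ : ℝ → ℝ) {Ω : Type*} [MeasurableSpace Ω] (μ : Measure Ω) (τ : Ω → Ω)
    (k : ℕ) : Set (Ω → ℝ) :=
  {f | MemOrlicz φ μ f ∧ (f ∘ τ^[k]) =ᵐ[μ] (fun _ => 0)}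

/-- The range of `C_τ ^ k` acting on `L^φ(Ω)`. -/
def ranPow (φ : ℝ → ℝ) {Ω : Type*} [MeasurableSpace Ω] (μ : Measure Ω) (τ : Ω → Ω)
    (k : ℕ) : Set (Ω → ℝ) :=
  (fun f : Ω → ℝ => f ∘ τ^[k]) '' {f | MemOrlicz φ μ f}

/-- If `μ(τ⁻¹ A) ≤ K μ(A)` for all sets of finite measure, then the composition operator
`C_τ` is bounded from `L^φ(Ω)` into itself. -/
theorem composition_operator_bounded {Ω : Type*} [MeasurableSpace Ω] (μ : Measure Ω)
    [SigmaFinite μ] (τ : Ω → Ω) (hτ : Measurable τ) (φ : ℝ → ℝ) (hφ : IsOrliczFn φ)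
    (K : ℝ) (hK : 0 < K)
    (hbd : ∀ A : Set Ω, MeasurableSet A → μ A < ⊤ → μ (τ ⁻¹' A) ≤ ENNReal.ofReal K * μ A) :
    BoundedCompOp φ μ τ := by
  obtain ⟨hcont, hconv, hmono, hzero, h0, hinf⟩ := hφ
  have hφ0 : φ 0 = 0 := (hzero 0 le_rfl).2 rfl
  -- scaling inequality from convexity
  have hscale : ∀ l x : ℝ, 0 ≤ l → l ≤ 1 → 0 ≤ x → φ (l * x) ≤ l * φ x := by
    intro l x hl hl1 hx
    have := hconv.2 (Set.mem_Ici.2 hx) (Set.mem_Ici.2 (le_refl (0:ℝ))) hl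
      (by linarith : (0:ℝ) ≤ 1 - l) (by ring)
    simpa [smul_eq_mul, hφ0] using this
  -- measurability of φ composed with nonnegative measurable functions
  have hφmeas : ∀ (g : Ω → ℝ), Measurable g → (∀ x, 0 ≤ g x) →
      Measurable fun x => ENNReal.ofReal (φ (g x)) := by
    intro g hg hg0
    have h1 : Measurable fun x => (⟨g x, Set.mem_Ici.2 (hg0 x)⟩ : Set.Ici (0:ℝ)) :=
      Measurable.subtype_mk hg
    have h2 : Continuous ((Set.Ici (0:ℝ)).restrict φ) :=
      continuousOn_iff_continuous_restrict.1 hcont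
    exact ENNReal.measurable_ofReal.comp ((h2.measurable).comp h1)
  -- the pushforward measure is dominated
  have hmap : Measure.map τ μ ≤ ENNReal.ofReal K • μ := by
    refine Measure.le_iff.2 fun s hs => ?_
    rw [Measure.map_apply hτ hs, Measure.smul_apply, smul_eq_mul]
    by_cases h : μ s < ⊤
    · exact hbd s hs h
    · push_neg at h
      rw [top_le_iff.mp h, ENNReal.mul_top (by simpa using hK.not_ge)]
      exact le_top
  -- key integral transfer inequality
  have hpush : ∀ (g : Ω → ℝ), Measurable g → (∀ x, 0 ≤ g x) →
      ∫⁻ x, ENNReal.ofReal (φ (g (τ x))) ∂μ ≤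
        ENNReal.ofReal K * ∫⁻ x, ENNReal.ofReal (φ (g x)) ∂μ := by
    intro g hg hg0
    have hmeas := hφmeas g hg hg0
    calc ∫⁻ x, ENNReal.ofReal (φ (g (τ x))) ∂μ
        = ∫⁻ x, ENNReal.ofReal (φ (g x)) ∂(Measure.map τ μ) := (lintegral_map hmeas hτ).symm
      _ ≤ ∫⁻ x, ENNReal.ofReal (φ (g x)) ∂(ENNReal.ofReal K • μ) :=
          lintegral_mono' hmap le_rfl
      _ = ENNReal.ofReal K * ∫⁻ x, ENNReal.ofReal (φ (g x)) ∂μ := lintegral_smul_measure _ _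
  -- membership preservation
  have hmem : ∀ f : Ω → ℝ, MemOrlicz φ μ f → MemOrlicz φ μ (f ∘ τ) := by
    rintro f ⟨hf, α, hα, hI⟩
    refine ⟨hf.comp hτ, α, hα, ?_⟩
    have key := hpush (fun x => α * |f x|) (by fun_prop) (fun x => by positivity)
    calc ∫⁻ x, ENNReal.ofReal (φ (α * |(f ∘ τ) x|)) ∂μ
        ≤ ENNReal.ofReal K * ∫⁻ x, ENNReal.ofReal (φ (α * |f x|)) ∂μ := key
      _ < ⊤ := ENNReal.mul_lt_top ENNReal.ofReal_lt_top hI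
  refine ⟨hmem, max K 1, le_trans zero_le_one (le_max_right K 1), ?_⟩
  set K' : ℝ := max K 1 with hK'def
  have hK'1 : (1:ℝ) ≤ K' := le_max_right K 1
  have hK'pos : (0:ℝ) < K' := lt_of_lt_of_le one_pos hK'1
  rintro f hfmem
  obtain ⟨hf, α, hα, hI⟩ := hfmem
  set Sf : Set ℝ := {k : ℝ | 0 < k ∧ ∫⁻ x, ENNReal.ofReal (φ (|f x| / k)) ∂μ ≤ 1} with hSf
  set Sg : Set ℝ :=
    {k : ℝ | 0 < k ∧ ∫⁻ x, ENNReal.ofReal (φ (|(f ∘ τ) x| / k)) ∂μ ≤ 1} with hSg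
  -- Sf is nonempty
  have hn : Sf.Nonempty := by
    set I : ℝ := (∫⁻ x, ENNReal.ofReal (φ (α * |f x|)) ∂μ).toReal with hIdef
    have hI0 : 0 ≤ I := ENNReal.toReal_nonneg
    set l : ℝ := 1 / (I + 1) with hldef
    have hl0 : 0 < l := by positivity
    have hl1 : l ≤ 1 := by
      rw [hldef, div_le_one (by linarith)]; linarith
    refine ⟨1 / (α * l), ⟨by positivity, ?_⟩⟩
    have hptwise : ∀ x, ENNReal.ofReal (φ (|f x| / (1 / (α * l)))) ≤
        ENNReal.ofReal l * ENNReal.ofReal (φ (α * |f x|)) := by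
      intro x
      have h1 : |f x| / (1 / (α * l)) = l * (α * |f x|) := by
        field_simp
      rw [h1, ← ENNReal.ofReal_mul hl0.le]
      exact ENNReal.ofReal_le_ofReal (hscale l (α * |f x|) hl0.le hl1 (by positivity))
    calc ∫⁻ x, ENNReal.ofReal (φ (|f x| / (1 / (α * l)))) ∂μ
        ≤ ∫⁻ x, ENNReal.ofReal l * ENNReal.ofReal (φ (α * |f x|)) ∂μ :=
          lintegral_mono hptwise
      _ = ENNReal.ofReal l * ∫⁻ x, ENNReal.ofReal (φ (α * |f x|)) ∂μ :=
          lintegral_const_mul' _ _ ENNReal.ofReal_ne_top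
      _ ≤ ENNReal.ofReal l * ENNReal.ofReal I := by
          gcongr
          rw [hIdef]
          exact le_of_eq (ENNReal.ofReal_toReal hI.ne).symm
      _ = ENNReal.ofReal (l * I) := (ENNReal.ofReal_mul hl0.le).symm
      _ ≤ 1 := by
          rw [← ENNReal.ofReal_one]
          apply ENNReal.ofReal_le_ofReal
          rw [hldef]
          rw [div_mul_eq_mul_div, div_le_one (by linarith)]
          linarith
  -- each k ∈ Sf gives K' * k ∈ Sg
  have hstep : ∀ k ∈ Sf, K' * k ∈ Sg := by
    rintro k ⟨hk, hkI⟩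
    refine ⟨by positivity, ?_⟩
    have hptwise : ∀ x, ENNReal.ofReal (φ (|f x| / (K' * k))) ≤
        ENNReal.ofReal (1 / K') * ENNReal.ofReal (φ (|f x| / k)) := by
      intro x
      have h1 : |f x| / (K' * k) = (1 / K') * (|f x| / k) := by
        field_simp
      rw [h1, ← ENNReal.ofReal_mul (by positivity)]
      refine ENNReal.ofReal_le_ofReal (hscale (1 / K') (|f x| / k) (by positivity) ?_
        (by positivity))
      rw [div_le_one hK'pos]; exact hK'1
    calc ∫⁻ x, ENNReal.ofReal (φ (|(f ∘ τ) x| / (K' * k))) ∂μ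
        ≤ ENNReal.ofReal K * ∫⁻ x, ENNReal.ofReal (φ (|f x| / (K' * k))) ∂μ :=
          hpush (fun x => |f x| / (K' * k)) (by fun_prop) (fun x => by positivity)
      _ ≤ ENNReal.ofReal K *
          ∫⁻ x, ENNReal.ofReal (1 / K') * ENNReal.ofReal (φ (|f x| / k)) ∂μ :=
          mul_le_mul_right (lintegral_mono hptwise) _
      _ = ENNReal.ofReal K * (ENNReal.ofReal (1 / K') *
          ∫⁻ x, ENNReal.ofReal (φ (|f x| / k)) ∂μ) := by
          rw [lintegral_const_mul' _ _ ENNReal.ofReal_ne_top]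
      _ ≤ ENNReal.ofReal K * (ENNReal.ofReal (1 / K') * 1) := by gcongr
      _ = ENNReal.ofReal (K * (1 / K')) := by
          rw [mul_one, ← ENNReal.ofReal_mul hK.le]
      _ ≤ 1 := by
          rw [← ENNReal.ofReal_one]
          apply ENNReal.ofReal_le_ofReal
          rw [mul_one_div, div_le_one hK'pos]
          exact le_max_left K 1
  have hbddg : BddBelow Sg := ⟨0, fun k hk => hk.1.le⟩
  -- conclude
  have hle : ∀ k ∈ Sf, luxNorm φ μ (f ∘ τ) ≤ K' * k := by
    intro k hk
    exact csInf_le hbddg (hstep k hk)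
  have hfinal : luxNorm φ μ (f ∘ τ) / K' ≤ luxNorm φ μ f := by
    apply le_csInf hn
    intro k hk
    rw [div_le_iff₀ hK'pos, mul_comm]
    exact hle k hk
  calc luxNorm φ μ (f ∘ τ) = K' * (luxNorm φ μ (f ∘ τ) / K') := by
        field_simp
    _ ≤ K' * luxNorm φ μ f := by gcongr
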